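/- Given 1 ≤ p ≤ q ≤ 2, suppose A ∈ ℝ^{m×N} satisfies the ℓ_ω^q-BRNSP of order s ≥ ‖ω‖_∞² with constants 0 < ρ < 1 and τ > 0. Then for any x, z ∈ ℝ^N: ‖z − x‖_{2,p}^{(ω)} ≤ (C_ρ/s^{1−1/p})(‖z‖_{2,1}^{(ω)} − ‖x‖_{2,1}^{(ω)} + 2σ_s(x)_{2,1}^{(ω)}) + (D_{ρ,τ}/s^{1/q−1/p})‖A(z−x)‖₂, where C_ρ = (1+ρ)²/(1−ρ) and D_{ρ,τ} = τ(3+ρ)/(1−ρ). -/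

import Mathlib

open Finset

noncomputable def l2 {n : Type*} [Fintype n] (v : n → ℝ) : ℝ := Real.sqrt (∑ i, (v i) ^ 2)

variable {B : ℕ} {d : Fin B → ℕ}

/-- ℓ² norm of the block `b` of the block vector `x`. -/
noncomputable def bn (x : ((b : Fin B) × Fin (d b)) → ℝ) (b : Fin B) : ℝ :=
  Real.sqrt (∑ i : Fin (d b), (x ⟨b, i⟩) ^ 2)

/-- Weighted block ℓ¹ norm `‖x‖_{2,1}^{(ω)}`. -/
noncomputable def n21 (ω : Fin B → ℝ) (x : ((b : Fin B) × Fin (d b)) → ℝ) : ℝ :=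
  ∑ b, ω b * bn x b

/-- Weighted block (2,p) norm `‖x‖_{2,p}^{(ω)}` (real exponents). -/
noncomputable def n2p (ω : Fin B → ℝ) (p : ℝ) (x : ((b : Fin B) × Fin (d b)) → ℝ) : ℝ :=
  (∑ b, ω b ^ (2 - p) * bn x b ^ p) ^ (1 / p)

/-- Restriction of `x` to the blocks in `S` (zero outside). -/
def rs (S : Finset (Fin B)) (x : ((b : Fin B) × Fin (d b)) → ℝ) :
    ((b : Fin B) × Fin (d b)) → ℝ :=
  fun j => if j.1 ∈ S then x j else 0

/-- Weighted cardinality `ω(S) = ∑_{b∈S} ω_b²`. -/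
def wCard (ω : Fin B → ℝ) (S : Finset (Fin B)) : ℝ := ∑ b ∈ S, ω b ^ 2

/-- Weighted block sparsity `‖x‖₀^{(ω)}`. -/
noncomputable def wspar (ω : Fin B → ℝ) (x : ((b : Fin B) × Fin (d b)) → ℝ) : ℝ :=
  ∑ b, if bn x b = 0 then 0 else ω b ^ 2

/-- Best weighted `s`-block approximation error in the `‖·‖_{2,1}^{(ω)}` norm. -/
noncomputable def sigmaS (ω : Fin B → ℝ) (s : ℝ) (x : ((b : Fin B) × Fin (d b)) → ℝ) : ℝ :=
  sInf {t | ∃ z, wspar ω z ≤ s ∧ t = n21 ω (x - z)}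

/-- Weighted block restricted isometry property of order `t` with constant `δ`. -/
noncomputable def WBRIP {m : ℕ} (A : Matrix (Fin m) ((b : Fin B) × Fin (d b)) ℝ)
    (ω : Fin B → ℝ) (t δ : ℝ) : Prop :=
  ∀ x : ((b : Fin B) × Fin (d b)) → ℝ, wspar ω x ≤ t →
    (1 - δ) * l2 x ^ 2 ≤ l2 (A.mulVec x) ^ 2 ∧ l2 (A.mulVec x) ^ 2 ≤ (1 + δ) * l2 x ^ 2

lemma bn_nonneg (x : ((b : Fin B) × Fin (d b)) → ℝ) (b : Fin B) : 0 ≤ bn x b :=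
  Real.sqrt_nonneg _

lemma bn_eq_zero {x : ((b : Fin B) × Fin (d b)) → ℝ} {b : Fin B} (h : bn x b = 0) :
    ∀ i, x ⟨b, i⟩ = 0 := by
  intro i
  have h2 : ∑ i : Fin (d b), (x ⟨b, i⟩) ^ 2 = 0 :=
    le_antisymm (Real.sqrt_eq_zero'.mp h) (by positivity)
  have := (Finset.sum_eq_zero_iff_of_nonneg (fun i _ => sq_nonneg (x ⟨b, i⟩))).mp h2 i
    (Finset.mem_univ i)
  exact pow_eq_zero_iff (two_ne_zero) |>.mp this

lemma bn_eq_norm (x : ((b : Fin B) × Fin (d b)) → ℝ) (b : Fin B) :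
    bn x b = ‖(WithLp.equiv 2 (Fin (d b) → ℝ)).symm (fun i => x ⟨b, i⟩)‖ := by
  rw [EuclideanSpace.norm_eq]
  unfold bn
  congr 1
  refine Finset.sum_congr rfl fun i _ => ?_
  rw [WithLp.equiv_symm_apply, WithLp.ofLp_toLp, Real.norm_eq_abs, sq_abs]

lemma bn_sub_le (u w : ((b : Fin B) × Fin (d b)) → ℝ) (b : Fin B) :
    bn (u - w) b ≤ bn u b + bn w b := by
  rw [bn_eq_norm, bn_eq_norm, bn_eq_norm]
  have h : (WithLp.equiv 2 (Fin (d b) → ℝ)).symm (fun i => (u - w) ⟨b, i⟩)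
      = (WithLp.equiv 2 (Fin (d b) → ℝ)).symm (fun i => u ⟨b, i⟩)
        - (WithLp.equiv 2 (Fin (d b) → ℝ)).symm (fun i => w ⟨b, i⟩) := rfl
  rw [h]
  exact norm_sub_le _ _

lemma bn_rs (S : Finset (Fin B)) (u : ((b : Fin B) × Fin (d b)) → ℝ) (b : Fin B) :
    bn (rs S u) b = if b ∈ S then bn u b else 0 := by
  by_cases hb : b ∈ S <;> simp [bn, rs, hb]

lemma hoelder_w {ι : Type*} (S : Finset ι) (w a : ι → ℝ) (hw : ∀ b, 0 < w b)
    (ha : ∀ b, 0 ≤ a b) {r t : ℝ} (h1r : 1 ≤ r) (hrt : r ≤ t) :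
    ∑ b ∈ S, w b ^ (1 - r) * a b ^ r ≤
      (∑ b ∈ S, w b ^ (1 - t) * a b ^ t) ^ (r / t) * (∑ b ∈ S, w b) ^ (1 - r / t) := by
  rcases eq_or_lt_of_le hrt with rfl | hlt
  · rw [div_self (by linarith : r ≠ 0), Real.rpow_one, sub_self, Real.rpow_zero, mul_one]
  · have hr0 : (0:ℝ) < r := by linarith
    have ht0 : (0:ℝ) < t := by linarith
    have htr : (0:ℝ) < t - r := by linarith
    have hpq : (t/r).HolderConjugate (t/(t-r)) := by
      refine Real.holderConjugate_iff.mpr ⟨?_, ?_⟩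
      · rw [lt_div_iff₀ hr0]; linarith
      · rw [inv_div, inv_div, ← add_div]
        field_simp
        ring
    have key : ∀ b, w b ^ (1 - r) * a b ^ r
        = (w b ^ (1 - t) * a b ^ t) ^ (r / t) * w b ^ (1 - r / t) := by
      intro b
      rw [Real.mul_rpow (Real.rpow_nonneg (hw b).le _) (Real.rpow_nonneg (ha b) _),
        ← Real.rpow_mul (hw b).le, ← Real.rpow_mul (ha b), mul_right_comm,
        ← Real.rpow_add (hw b),
        show (1 - t) * (r / t) + (1 - r / t) = 1 - r by field_simp; ring,
        show t * (r / t) = r by field_simp]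
    calc ∑ b ∈ S, w b ^ (1 - r) * a b ^ r
        = ∑ b ∈ S, (w b ^ (1 - t) * a b ^ t) ^ (r / t) * w b ^ (1 - r / t) :=
          Finset.sum_congr rfl fun b _ => key b
      _ ≤ (∑ b ∈ S, ((w b ^ (1 - t) * a b ^ t) ^ (r / t)) ^ (t / r)) ^ (1 / (t / r)) *
          (∑ b ∈ S, (w b ^ (1 - r / t)) ^ (t / (t - r))) ^ (1 / (t / (t - r))) :=
          Real.inner_le_Lp_mul_Lq_of_nonneg S hpq
            (fun b _ => Real.rpow_nonneg (mul_nonneg (Real.rpow_nonneg (hw b).le _)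
              (Real.rpow_nonneg (ha b) _)) _)
            (fun b _ => Real.rpow_nonneg (hw b).le _)
      _ = (∑ b ∈ S, w b ^ (1 - t) * a b ^ t) ^ (r / t) * (∑ b ∈ S, w b) ^ (1 - r / t) := by
          have e1 : ∀ b : ι, ((w b ^ (1 - t) * a b ^ t) ^ (r / t)) ^ (t / r)
              = w b ^ (1 - t) * a b ^ t := by
            intro b
            rw [← Real.rpow_mul (mul_nonneg (Real.rpow_nonneg (hw b).le _) (Real.rpow_nonneg (ha b) _)), show r / t * (t / r) = 1 by field_simp,
              Real.rpow_one]
          have e2 : ∀ b : ι, (w b ^ (1 - r / t)) ^ (t / (t - r)) = w b := by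
            intro b
            rw [← Real.rpow_mul (hw b).le,
              show (1 - r / t) * (t / (t - r)) = 1 by field_simp, Real.rpow_one]
          rw [Finset.sum_congr rfl fun b _ => e1 b, Finset.sum_congr rfl fun b _ => e2 b,
            one_div_div, show 1 / (t / (t - r)) = 1 - r / t by field_simp]


set_option maxHeartbeats 1000000 in
theorem stmt4 {m : ℕ} (A : Matrix (Fin m) ((b : Fin B) × Fin (d b)) ℝ)
    (ω : Fin B → ℝ) (hω : ∀ b, 1 ≤ ω b) (s ρ τ p q : ℝ)
    (hρ0 : 0 < ρ) (hρ1 : ρ < 1) (hτ : 0 < τ)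
    (hp : 1 ≤ p) (hpq : p ≤ q) (hq2 : q ≤ 2)
    (hs : ∀ b, ω b ^ 2 ≤ s)
    (hNSP : ∀ (v : ((b : Fin B) × Fin (d b)) → ℝ) (S : Finset (Fin B)), wCard ω S ≤ s →
      n2p ω q (rs S v) ≤ ρ / s ^ (1 - 1 / q) * n21 ω (rs Sᶜ v) + τ * l2 (A.mulVec v))
    (x z : ((b : Fin B) × Fin (d b)) → ℝ) :
    n2p ω p (z - x) ≤
      ((1 + ρ) ^ 2 / (1 - ρ)) / s ^ (1 - 1 / p) *
          (n21 ω z - n21 ω x + 2 * sigmaS ω s x)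
        + (τ * (3 + ρ) / (1 - ρ)) / s ^ (1 / q - 1 / p) * l2 (A.mulVec (z - x)) := by
  classical
  have hp0 : (0:ℝ) < p := by linarith
  have hq1 : (1:ℝ) ≤ q := le_trans hp hpq
  have hq0 : (0:ℝ) < q := by linarith
  have h1ρ : (0:ℝ) < 1 - ρ := by linarith
  have h1ρ' : (1:ℝ) - ρ ≠ 0 := ne_of_gt h1ρ
  by_cases hBe : Nonempty (Fin B)
  case neg =>
    have hIE : IsEmpty (Fin B) := not_nonempty_iff.mp hBe
    have hIE2 : IsEmpty ((b : Fin B) × Fin (d b)) := ⟨fun j => hIE.elim j.1⟩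
    have huniv : (Finset.univ : Finset (Fin B)) = ∅ := Finset.univ_eq_empty
    have hn2p0 : n2p ω p (z - x) = 0 := by
      unfold n2p
      rw [huniv]
      simp [Real.zero_rpow (inv_ne_zero hp0.ne'), Real.zero_rpow (one_div_ne_zero hp0.ne')]
    have hn21 : ∀ u : ((b : Fin B) × Fin (d b)) → ℝ, n21 ω u = 0 := by
      intro u; unfold n21; rw [huniv]; simp
    have hl2 : l2 (A.mulVec (z - x)) = 0 := by
      unfold l2
      have h : ∀ i, A.mulVec (z - x) i = 0 := by
        intro i
        unfold Matrix.mulVec dotProduct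
        rw [Finset.univ_eq_empty]
        simp
      simp [h]
    have hσ : sigmaS ω s x = 0 := by
      unfold sigmaS
      have hws : ∀ u : ((b : Fin B) × Fin (d b)) → ℝ, wspar ω u = 0 := by
        intro u; unfold wspar; rw [huniv]; simp
      by_cases h0s : (0:ℝ) ≤ s
      · have hset : {t | ∃ u, wspar ω u ≤ s ∧ t = n21 ω (x - u)} = {0} := by
          ext t
          simp only [Set.mem_setOf_eq, Set.mem_singleton_iff, hws, hn21]
          constructor
          · rintro ⟨u, _, rfl⟩; rfl
          · rintro rfl; exact ⟨0, h0s, rfl⟩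
        rw [hset]
        exact csInf_singleton 0
      · have hset : {t | ∃ u, wspar ω u ≤ s ∧ t = n21 ω (x - u)} = ∅ := by
          ext t
          simp only [Set.mem_setOf_eq, Set.mem_empty_iff_false, iff_false, not_exists]
          rintro u ⟨hu, _⟩
          rw [hws] at hu
          exact h0s hu
        rw [hset]
        exact Real.sInf_empty
    rw [hn2p0, hσ, hl2, hn21 z, hn21 x]
    simp
  case pos =>
    obtain ⟨b0⟩ := hBe
    have hs1 : (1:ℝ) ≤ s := le_trans (by nlinarith [hω b0]) (hs b0)
    have hs0 : (0:ℝ) < s := by linarith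
    have hωpos : ∀ b, (0:ℝ) < ω b := fun b => lt_of_lt_of_le one_pos (hω b)
    have hσ0 : 0 ≤ sigmaS ω s x := by
      apply Real.sInf_nonneg
      rintro t ⟨u, _, rfl⟩
      exact Finset.sum_nonneg fun b _ => mul_nonneg (hωpos b).le (bn_nonneg _ b)
    set v := z - x with hv
    set E := l2 (A.mulVec v) with hE
    have hE0 : 0 ≤ E := Real.sqrt_nonneg _
    set w : Fin B → ℝ := fun b => ω b ^ 2 with hwdef
    set a : Fin B → ℝ := fun b => ω b * bn v b with hadef
    have hw0 : ∀ b, 0 < w b := fun b => pow_pos (hωpos b) 2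
    have ha0 : ∀ b, 0 ≤ a b := fun b => mul_nonneg (hωpos b).le (bn_nonneg v b)
    have hwCard : ∀ T : Finset (Fin B), wCard ω T = ∑ b ∈ T, w b := fun T => rfl
    have hterm : ∀ (r : ℝ) (b : Fin B),
        w b ^ ((1:ℝ) - r) * a b ^ r = ω b ^ ((2:ℝ) - r) * bn v b ^ r := by
      intro r b
      have hh : ((ω b ^ 2 : ℝ)) ^ ((1:ℝ) - r) = ω b ^ ((2:ℝ) * (1 - r)) := by
        rw [← Real.rpow_natCast (ω b) 2, ← Real.rpow_mul (hωpos b).le]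
        norm_num
      show (ω b ^ 2 : ℝ) ^ ((1:ℝ) - r) * (ω b * bn v b) ^ r = ω b ^ ((2:ℝ) - r) * bn v b ^ r
      rw [hh, Real.mul_rpow (hωpos b).le (bn_nonneg v b), ← mul_assoc,
        ← Real.rpow_add (hωpos b), show (2:ℝ) * (1 - r) + r = 2 - r by ring]
    have hsum_set : ∀ (r : ℝ) (S : Finset (Fin B)),
        ∑ b ∈ S, ω b ^ ((2:ℝ) - r) * bn v b ^ r = ∑ b ∈ S, w b ^ ((1:ℝ) - r) * a b ^ r :=
      fun r S => Finset.sum_congr rfl fun b _ => (hterm r b).symm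
    have hn2p_rs : ∀ (r : ℝ), r ≠ 0 → ∀ S : Finset (Fin B),
        n2p ω r (rs S v) = (∑ b ∈ S, w b ^ ((1:ℝ) - r) * a b ^ r) ^ ((1:ℝ)/r) := by
      intro r hr S
      unfold n2p
      rw [← hsum_set r S]
      congr 1
      calc ∑ b, ω b ^ (2 - r) * bn (rs S v) b ^ r
          = ∑ b, (if b ∈ S then ω b ^ (2 - r) * bn v b ^ r else 0) := by
            refine Finset.sum_congr rfl fun b _ => ?_
            rw [bn_rs]
            split
            · rfl
            · rw [Real.zero_rpow hr, mul_zero]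
        _ = ∑ b ∈ S, ω b ^ (2 - r) * bn v b ^ r := by
            rw [Finset.sum_ite_mem, Finset.univ_inter]
    have hn21_rs : ∀ S : Finset (Fin B), n21 ω (rs S v) = ∑ b ∈ S, a b := by
      intro S
      unfold n21
      calc ∑ b, ω b * bn (rs S v) b = ∑ b, (if b ∈ S then ω b * bn v b else 0) := by
            refine Finset.sum_congr rfl fun b _ => ?_
            rw [bn_rs]
            split <;> simp
        _ = ∑ b ∈ S, a b := by rw [Finset.sum_ite_mem, Finset.univ_inter]
    have hn2pv : n2p ω p v = (∑ b, w b ^ ((1:ℝ) - p) * a b ^ p) ^ ((1:ℝ)/p) := by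
      unfold n2p
      rw [hsum_set p Finset.univ]
    set sA := ∑ b, a b with hsA
    have hsA0 : 0 ≤ sA := Finset.sum_nonneg fun b _ => ha0 b
    have hs1q0 : (0:ℝ) < s ^ ((1:ℝ) - 1/q) := Real.rpow_pos_of_pos hs0 _
    clear_value v E w a sA
    rcases eq_or_lt_of_le hsA0 with hA0 | hA0
    · -- degenerate case : v = 0
      have hA0' : ∑ b, a b = 0 := by rw [← hsA, ← hA0]
      have hab : ∀ b, a b = 0 := fun b =>
        (Finset.sum_eq_zero_iff_of_nonneg (fun b _ => ha0 b)).mp hA0' b (Finset.mem_univ b)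
      have hbn0 : ∀ b, bn v b = 0 := by
        intro b
        have hh := hab b
        simp only [hadef] at hh
        rcases mul_eq_zero.mp hh with h | h
        · exact absurd h (ne_of_gt (hωpos b))
        · exact h
      have hv0 : v = 0 := by
        funext j
        exact bn_eq_zero (hbn0 j.1) j.2
      have hzx : z = x := by
        have h : z - x = 0 := by rw [← hv, hv0]
        exact sub_eq_zero.mp h
      have hlhs : n2p ω p v = 0 := by
        rw [hn2pv]
        have h : ∀ b : Fin B, w b ^ ((1:ℝ) - p) * a b ^ p = 0 := by
          intro b
          rw [hab b, Real.zero_rpow hp0.ne', mul_zero]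
        rw [Finset.sum_congr rfl fun b _ => h b]
        simp [Real.zero_rpow (inv_ne_zero hp0.ne'), Real.zero_rpow (one_div_ne_zero hp0.ne')]
      have hE00 : E = 0 := by
        rw [hE, hv0]
        unfold l2
        simp [Matrix.mulVec_zero]
      rw [hlhs, hE00, hzx]
      rw [sub_self, zero_add, mul_zero, add_zero]
      apply mul_nonneg
      · apply div_nonneg (by positivity) (Real.rpow_pos_of_pos hs0 _).le
      · linarith
    · -- main case : sA > 0
      have hNSP' : ∀ S : Finset (Fin B), wCard ω S ≤ s →
          (∑ b ∈ S, w b ^ ((1:ℝ) - q) * a b ^ q) ^ ((1:ℝ)/q)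
            ≤ ρ / s ^ ((1:ℝ) - 1/q) * (∑ b ∈ Sᶜ, a b) + τ * E := by
        intro S hS
        have h := hNSP v S hS
        rwa [hn2p_rs q hq0.ne' S, hn21_rs Sᶜ, ← hE] at h
      have hL1NSP : ∀ T : Finset (Fin B), wCard ω T ≤ s →
          ∑ b ∈ T, a b ≤ ρ * (∑ b ∈ Tᶜ, a b) + (τ * s ^ ((1:ℝ) - 1/q)) * E := by
        intro T hT
        have hH := hoelder_w T w a hw0 ha0 (le_refl (1:ℝ)) hq1
        have hsum1 : ∑ b ∈ T, w b ^ ((1:ℝ) - 1) * a b ^ (1:ℝ) = ∑ b ∈ T, a b := by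
          refine Finset.sum_congr rfl fun b _ => ?_
          rw [sub_self, Real.rpow_zero, one_mul, Real.rpow_one]
        rw [hsum1] at hH
        have hG0 : 0 ≤ (∑ b ∈ T, w b ^ ((1:ℝ) - q) * a b ^ q) ^ ((1:ℝ)/q) :=
          Real.rpow_nonneg (Finset.sum_nonneg fun b _ =>
            mul_nonneg (Real.rpow_nonneg (hw0 b).le _) (Real.rpow_nonneg (ha0 b) _)) _
        have hWT : (∑ b ∈ T, w b) ^ ((1:ℝ) - 1/q) ≤ s ^ ((1:ℝ) - 1/q) := by
          apply Real.rpow_le_rpow (Finset.sum_nonneg fun b _ => (hw0 b).le)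
          · rw [← hwCard T]; exact hT
          · have h : 1/q ≤ 1 := by rw [div_le_one hq0]; exact hq1
            linarith
        calc ∑ b ∈ T, a b
            ≤ (∑ b ∈ T, w b ^ ((1:ℝ) - q) * a b ^ q) ^ ((1:ℝ)/q) * (∑ b ∈ T, w b) ^ ((1:ℝ) - 1/q) := hH
          _ ≤ (∑ b ∈ T, w b ^ ((1:ℝ) - q) * a b ^ q) ^ ((1:ℝ)/q) * s ^ ((1:ℝ) - 1/q) :=
              mul_le_mul_of_nonneg_left hWT hG0
          _ ≤ (ρ / s ^ ((1:ℝ) - 1/q) * (∑ b ∈ Tᶜ, a b) + τ * E) * s ^ ((1:ℝ) - 1/q) :=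
              mul_le_mul_of_nonneg_right (hNSP' T hT) hs1q0.le
          _ = ρ * (∑ b ∈ Tᶜ, a b) + (τ * s ^ ((1:ℝ) - 1/q)) * E := by
              field_simp
      have hL1 : sA ≤ (1+ρ)/(1-ρ) * (n21 ω z - n21 ω x + 2 * sigmaS ω s x)
          + 2*(τ * s ^ ((1:ℝ) - 1/q))/(1-ρ) * E := by
        apply le_of_forall_pos_le_add
        intro ε hε
        have hε'0 : 0 < ε * (1-ρ) / (2*(1+ρ)) := by
          apply div_pos (mul_pos hε h1ρ)
          linarith
        have hne : {t | ∃ u, wspar ω u ≤ s ∧ t = n21 ω (x - u)}.Nonempty := by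
          refine ⟨n21 ω (x - 0), 0, ?_, rfl⟩
          have h0 : wspar ω (0 : ((b : Fin B) × Fin (d b)) → ℝ) = 0 := by
            unfold wspar
            refine Finset.sum_eq_zero fun b _ => ?_
            have hbn : bn (0 : ((b : Fin B) × Fin (d b)) → ℝ) b = 0 := by
              unfold bn
              simp
            rw [if_pos hbn]
          rw [h0]
          linarith
        obtain ⟨t0, ht0mem, ht0lt⟩ := Real.lt_sInf_add_pos hne hε'0
        obtain ⟨u, hu_spar, rfl⟩ := ht0mem
        have ht0lt' : n21 ω (x - u) < sigmaS ω s x + ε * (1-ρ) / (2*(1+ρ)) := ht0lt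
        set T := Finset.univ.filter (fun b => bn u b ≠ 0) with hT
        have hTcard : wCard ω T ≤ s := by
          rw [hwCard]
          have heq : ∑ b ∈ T, w b = wspar ω u := by
            rw [hT, Finset.sum_filter]
            unfold wspar
            refine Finset.sum_congr rfl fun b _ => ?_
            by_cases hb : bn u b = 0 <;> simp [hb, hwdef]
          rw [heq]
          exact hu_spar
        have hTx : ∑ b ∈ Tᶜ, ω b * bn x b ≤ n21 ω (x - u) := by
          have hpt : ∀ b ∈ Tᶜ, ω b * bn x b = ω b * bn (x - u) b := by
            intro b hb
            rw [Finset.mem_compl, hT, Finset.mem_filter] at hb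
            have hbn : bn u b = 0 := by
              by_contra hc
              exact hb ⟨Finset.mem_univ b, hc⟩
            have heq : bn (x - u) b = bn x b := by
              unfold bn
              congr 1
              refine Finset.sum_congr rfl fun i _ => ?_
              have h0 := bn_eq_zero hbn i
              simp [h0]
            rw [heq]
          rw [Finset.sum_congr rfl hpt]
          unfold n21
          apply Finset.sum_le_sum_of_subset_of_nonneg (Finset.subset_univ _)
          intro b _ _
          exact mul_nonneg (hωpos b).le (bn_nonneg _ b)
        have hTx' : ∑ b ∈ Tᶜ, ω b * bn x b < sigmaS ω s x + ε * (1-ρ) / (2*(1+ρ)) :=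
          lt_of_le_of_lt hTx ht0lt'
        have hMN : (∑ b ∈ T, a b) + (∑ b ∈ Tᶜ, a b) = sA := by
          rw [hsA]; exact Finset.sum_add_sum_compl T a
        have hMle := hL1NSP T hTcard
        have hN0 : 0 ≤ ∑ b ∈ Tᶜ, a b := Finset.sum_nonneg fun b _ => ha0 b
        have he1 : ∀ b, bn v b ≤ bn z b + bn x b := by
          intro b
          have h := bn_sub_le z x b
          rw [← hv] at h
          exact h
        have he2 : ∀ b, bn x b ≤ bn z b + bn v b := by
          intro b
          have h := bn_sub_le z v b
          rw [show z - v = x from by rw [hv]; exact sub_sub_cancel z x] at h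
          exact h
        have hVc : (∑ b ∈ Tᶜ, a b) ≤ (∑ b ∈ Tᶜ, ω b * bn z b) + (∑ b ∈ Tᶜ, ω b * bn x b) := by
          rw [← Finset.sum_add_distrib]
          refine Finset.sum_le_sum fun b _ => ?_
          have h := he1 b
          simp only [hadef]
          nlinarith [hωpos b]
        have hXt : (∑ b ∈ T, ω b * bn x b) ≤ (∑ b ∈ T, ω b * bn z b) + (∑ b ∈ T, a b) := by
          rw [← Finset.sum_add_distrib]
          refine Finset.sum_le_sum fun b _ => ?_
          have h := he2 b
          simp only [hadef]
          nlinarith [hωpos b]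
        have hzsplit : (∑ b ∈ T, ω b * bn z b) + (∑ b ∈ Tᶜ, ω b * bn z b) = n21 ω z :=
          Finset.sum_add_sum_compl T _
        have hxsplit : (∑ b ∈ T, ω b * bn x b) + (∑ b ∈ Tᶜ, ω b * bn x b) = n21 ω x :=
          Finset.sum_add_sum_compl T _
        have hτ10 : 0 ≤ τ * s ^ ((1:ℝ) - 1/q) := mul_nonneg hτ.le hs1q0.le
        have hstep1 : (1-ρ) * (∑ b ∈ Tᶜ, a b) ≤
            (n21 ω z - n21 ω x + 2 * sigmaS ω s x + 2 * (ε * (1-ρ) / (2*(1+ρ))))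
              + (τ * s ^ ((1:ℝ) - 1/q)) * E := by
          linarith [hMle, hVc, hXt, hTx', hzsplit, hxsplit]
        have hstep2 : (1-ρ) * sA ≤ (1+ρ) * ((1-ρ) * (∑ b ∈ Tᶜ, a b))
            + (1-ρ) * ((τ * s ^ ((1:ℝ) - 1/q)) * E) := by
          nlinarith [hMle, hMN, hN0, mul_le_mul_of_nonneg_left hMle h1ρ.le]
        have hε'eq : 2 * (1+ρ) * (ε * (1-ρ) / (2*(1+ρ))) = ε * (1-ρ) := by
          field_simp
        have key : (1-ρ) * sA ≤ (1+ρ) * (n21 ω z - n21 ω x + 2 * sigmaS ω s x)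
            + 2*(τ * s ^ ((1:ℝ) - 1/q))*E + (1-ρ)*ε := by
          nlinarith [hstep2, mul_le_mul_of_nonneg_left hstep1 (by linarith : (0:ℝ) ≤ 1+ρ), hε'eq]
        have h2 : (1+ρ)/(1-ρ) * (n21 ω z - n21 ω x + 2 * sigmaS ω s x)
            + 2*(τ * s ^ ((1:ℝ) - 1/q))/(1-ρ) * E + ε
            = ((1+ρ) * (n21 ω z - n21 ω x + 2 * sigmaS ω s x)
                + 2*(τ * s ^ ((1:ℝ) - 1/q))*E + (1-ρ)*ε) / (1-ρ) := by
          field_simp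
        rw [h2, le_div_iff₀ h1ρ]
        linarith [key]
      -- Stechkin threshold set
      set Sa := Finset.univ.filter (fun b => w b * sA ≤ s * a b) with hSadef
      have hSaw : ∑ b ∈ Sa, w b ≤ s := by
        have h1 : (∑ b ∈ Sa, w b) * sA ≤ s * sA := by
          calc (∑ b ∈ Sa, w b) * sA = ∑ b ∈ Sa, w b * sA := by rw [Finset.sum_mul]
            _ ≤ ∑ b ∈ Sa, s * a b := by
                refine Finset.sum_le_sum fun b hb => ?_
                rw [hSadef, Finset.mem_filter] at hb
                exact hb.2
            _ = s * ∑ b ∈ Sa, a b := by rw [Finset.mul_sum]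
            _ ≤ s * sA := by
                apply mul_le_mul_of_nonneg_left _ hs0.le
                rw [hsA]
                exact Finset.sum_le_sum_of_subset_of_nonneg (Finset.subset_univ _)
                  fun b _ _ => ha0 b
        exact le_of_mul_le_mul_right h1 hA0
      have hSacard : wCard ω Sa ≤ s := by rw [hwCard]; exact hSaw
      have hSte : ∑ b ∈ Saᶜ, w b ^ ((1:ℝ) - p) * a b ^ p ≤ (sA/s) ^ (p-1) * sA := by
        calc ∑ b ∈ Saᶜ, w b ^ ((1:ℝ)-p) * a b ^ p
            ≤ ∑ b ∈ Saᶜ, (sA/s) ^ (p-1) * a b := by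
              refine Finset.sum_le_sum fun b hb => ?_
              have hbm : ¬ (w b * sA ≤ s * a b) := by
                rw [Finset.mem_compl, hSadef, Finset.mem_filter] at hb
                intro hc
                exact hb ⟨Finset.mem_univ b, hc⟩
              rcases eq_or_lt_of_le (ha0 b) with hb0 | hb0
              · rw [← hb0, Real.zero_rpow hp0.ne', mul_zero, mul_zero]
              · have hdiv : a b / w b ≤ sA / s := by
                  rw [div_le_div_iff₀ (hw0 b) hs0]
                  nlinarith [not_le.mp hbm]
                have hwinv : w b ^ ((1:ℝ)-p) = (w b ^ (p-1))⁻¹ := by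
                  rw [← Real.rpow_neg (hw0 b).le, show -(p-1) = 1-p by ring]
                have ha1 : a b ^ p = a b * a b ^ (p-1) := by
                  have h := Real.rpow_add hb0 1 (p-1)
                  rw [show (1:ℝ) + (p-1) = p by ring] at h
                  rw [h, Real.rpow_one]
                have hwp : (0:ℝ) < w b ^ (p-1) := Real.rpow_pos_of_pos (hw0 b) _
                have hrw : w b ^ ((1:ℝ)-p) * a b ^ p = a b * (a b / w b) ^ (p-1) := by
                  rw [hwinv, ha1, Real.div_rpow (ha0 b) (hw0 b).le]
                  field_simp
                rw [hrw]
                calc a b * (a b / w b) ^ (p-1)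
                    ≤ a b * (sA/s) ^ (p-1) := by
                      apply mul_le_mul_of_nonneg_left _ (ha0 b)
                      exact Real.rpow_le_rpow (div_nonneg (ha0 b) (hw0 b).le) hdiv
                        (by linarith)
                  _ = (sA/s) ^ (p-1) * a b := mul_comm _ _
          _ = (sA/s) ^ (p-1) * ∑ b ∈ Saᶜ, a b := by rw [← Finset.mul_sum]
          _ ≤ (sA/s) ^ (p-1) * sA := by
              apply mul_le_mul_of_nonneg_left _ (Real.rpow_nonneg (div_nonneg hA0.le hs0.le) _)
              rw [hsA]
              exact Finset.sum_le_sum_of_subset_of_nonneg (Finset.subset_univ _)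
                fun b _ _ => ha0 b
      -- cancellation helper
      have rpow_cancel : ∀ u t : ℝ, 0 ≤ u → 0 ≤ t → u ^ p ≤ t ^ p → u ≤ t := by
        intro u t hu ht h
        have h2 := Real.rpow_le_rpow (Real.rpow_nonneg hu p) h
          (le_of_lt (by positivity : (0:ℝ) < 1/p))
        rwa [← Real.rpow_mul hu, ← Real.rpow_mul ht, mul_one_div, div_self hp0.ne',
          Real.rpow_one, Real.rpow_one] at h2
      have hadd_pow : ∀ u t : ℝ, 0 ≤ u → 0 ≤ t → u ^ p + t ^ p ≤ (u + t) ^ p := by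
        intro u t hu ht
        have h := NNReal.add_rpow_le_rpow_add (⟨u, hu⟩ : NNReal) ⟨t, ht⟩ hp
        rw [← NNReal.coe_le_coe] at h
        push_cast at h
        exact h
      have hKp0 : 0 ≤ ∑ b ∈ Sa, w b ^ ((1:ℝ)-p) * a b ^ p :=
        Finset.sum_nonneg fun b _ => mul_nonneg (Real.rpow_nonneg (hw0 b).le _)
          (Real.rpow_nonneg (ha0 b) _)
      have hKpc0 : 0 ≤ ∑ b ∈ Saᶜ, w b ^ ((1:ℝ)-p) * a b ^ p :=
        Finset.sum_nonneg fun b _ => mul_nonneg (Real.rpow_nonneg (hw0 b).le _)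
          (Real.rpow_nonneg (ha0 b) _)
      have hKq0 : 0 ≤ ∑ b ∈ Sa, w b ^ ((1:ℝ)-q) * a b ^ q :=
        Finset.sum_nonneg fun b _ => mul_nonneg (Real.rpow_nonneg (hw0 b).le _)
          (Real.rpow_nonneg (ha0 b) _)
      have hX0 : 0 ≤ (∑ b ∈ Sa, w b ^ ((1:ℝ)-p) * a b ^ p) ^ ((1:ℝ)/p) :=
        Real.rpow_nonneg hKp0 _
      have hY0 : 0 ≤ (∑ b ∈ Saᶜ, w b ^ ((1:ℝ)-p) * a b ^ p) ^ ((1:ℝ)/p) :=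
        Real.rpow_nonneg hKpc0 _
      have hG0 : 0 ≤ (∑ b ∈ Sa, w b ^ ((1:ℝ)-q) * a b ^ q) ^ ((1:ℝ)/q) :=
        Real.rpow_nonneg hKq0 _
      have hXp : ((∑ b ∈ Sa, w b ^ ((1:ℝ)-p) * a b ^ p) ^ ((1:ℝ)/p)) ^ p
          = ∑ b ∈ Sa, w b ^ ((1:ℝ)-p) * a b ^ p := by
        rw [one_div]; exact Real.rpow_inv_rpow hKp0 hp0.ne'
      have hYp : ((∑ b ∈ Saᶜ, w b ^ ((1:ℝ)-p) * a b ^ p) ^ ((1:ℝ)/p)) ^ p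
          = ∑ b ∈ Saᶜ, w b ^ ((1:ℝ)-p) * a b ^ p := by
        rw [one_div]; exact Real.rpow_inv_rpow hKpc0 hp0.ne'
      have htri : n2p ω p v ≤ (∑ b ∈ Sa, w b ^ ((1:ℝ)-p) * a b ^ p) ^ ((1:ℝ)/p)
          + (∑ b ∈ Saᶜ, w b ^ ((1:ℝ)-p) * a b ^ p) ^ ((1:ℝ)/p) := by
        rw [hn2pv]
        have hsplit : (∑ b, w b ^ ((1:ℝ)-p) * a b ^ p)
            = (∑ b ∈ Sa, w b ^ ((1:ℝ)-p) * a b ^ p)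
              + (∑ b ∈ Saᶜ, w b ^ ((1:ℝ)-p) * a b ^ p) :=
          (Finset.sum_add_sum_compl Sa _).symm
        rw [hsplit]
        have hle : (∑ b ∈ Sa, w b ^ ((1:ℝ)-p) * a b ^ p)
            + (∑ b ∈ Saᶜ, w b ^ ((1:ℝ)-p) * a b ^ p)
            ≤ ((∑ b ∈ Sa, w b ^ ((1:ℝ)-p) * a b ^ p) ^ ((1:ℝ)/p)
              + (∑ b ∈ Saᶜ, w b ^ ((1:ℝ)-p) * a b ^ p) ^ ((1:ℝ)/p)) ^ p := by
          calc (∑ b ∈ Sa, w b ^ ((1:ℝ)-p) * a b ^ p)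
              + (∑ b ∈ Saᶜ, w b ^ ((1:ℝ)-p) * a b ^ p)
              = ((∑ b ∈ Sa, w b ^ ((1:ℝ)-p) * a b ^ p) ^ ((1:ℝ)/p)) ^ p
                + ((∑ b ∈ Saᶜ, w b ^ ((1:ℝ)-p) * a b ^ p) ^ ((1:ℝ)/p)) ^ p := by
                rw [hXp, hYp]
            _ ≤ _ := hadd_pow _ _ hX0 hY0
        calc ((∑ b ∈ Sa, w b ^ ((1:ℝ)-p) * a b ^ p)
              + (∑ b ∈ Saᶜ, w b ^ ((1:ℝ)-p) * a b ^ p)) ^ ((1:ℝ)/p)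
            ≤ (((∑ b ∈ Sa, w b ^ ((1:ℝ)-p) * a b ^ p) ^ ((1:ℝ)/p)
              + (∑ b ∈ Saᶜ, w b ^ ((1:ℝ)-p) * a b ^ p) ^ ((1:ℝ)/p)) ^ p) ^ ((1:ℝ)/p) :=
              Real.rpow_le_rpow (add_nonneg hKp0 hKpc0) hle (by positivity)
          _ = _ := by
              rw [← Real.rpow_mul (add_nonneg hX0 hY0), mul_one_div, div_self hp0.ne',
                Real.rpow_one]
      have hYle : (∑ b ∈ Saᶜ, w b ^ ((1:ℝ)-p) * a b ^ p) ^ ((1:ℝ)/p)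
          ≤ sA * s ^ ((1:ℝ)/p - 1) := by
        apply rpow_cancel _ _ hY0 (mul_nonneg hA0.le (Real.rpow_nonneg hs0.le _))
        rw [hYp]
        have h3 : (sA * s ^ ((1:ℝ)/p - 1)) ^ p = (sA/s) ^ (p-1) * sA := by
          have hL : (sA * s ^ ((1:ℝ)/p - 1)) ^ p = sA ^ p * s ^ ((1:ℝ) - p) := by
            rw [Real.mul_rpow hA0.le (Real.rpow_nonneg hs0.le _), ← Real.rpow_mul hs0.le]
            congr 1
            rw [show ((1:ℝ)/p - 1) * p = 1 - p by field_simp]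
          have hR : (sA/s) ^ (p-1) * sA = sA ^ p * s ^ ((1:ℝ) - p) := by
            rw [Real.div_rpow hA0.le hs0.le, div_eq_mul_inv, ← Real.rpow_neg hs0.le,
              show -(p-1) = 1 - p by ring, mul_right_comm]
            congr 1
            rw [← Real.rpow_add_one hA0.ne', show p - 1 + 1 = p by ring]
          rw [hL, hR]
        rw [h3]
        exact hSte
      have hXle : (∑ b ∈ Sa, w b ^ ((1:ℝ)-p) * a b ^ p) ^ ((1:ℝ)/p)
          ≤ (∑ b ∈ Sa, w b ^ ((1:ℝ)-q) * a b ^ q) ^ ((1:ℝ)/q) * s ^ ((1:ℝ)/p - 1/q) := by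
        apply rpow_cancel _ _ hX0 (mul_nonneg hG0 (Real.rpow_nonneg hs0.le _))
        rw [hXp]
        have h4 : ((∑ b ∈ Sa, w b ^ ((1:ℝ)-q) * a b ^ q) ^ ((1:ℝ)/q) * s ^ ((1:ℝ)/p - 1/q)) ^ p
            = (∑ b ∈ Sa, w b ^ ((1:ℝ)-q) * a b ^ q) ^ (p/q) * s ^ (1 - p/q) := by
          rw [Real.mul_rpow hG0 (Real.rpow_nonneg hs0.le _), ← Real.rpow_mul hs0.le,
            ← Real.rpow_mul hKq0]
          congr 1
          · rw [show (1:ℝ)/q * p = p/q by ring]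
          · rw [show ((1:ℝ)/p - 1/q) * p = 1 - p/q by field_simp]
        rw [h4]
        calc ∑ b ∈ Sa, w b ^ ((1:ℝ)-p) * a b ^ p
            ≤ (∑ b ∈ Sa, w b ^ ((1:ℝ)-q) * a b ^ q) ^ (p/q) * (∑ b ∈ Sa, w b) ^ (1 - p/q) :=
              hoelder_w Sa w a hw0 ha0 hp hpq
          _ ≤ (∑ b ∈ Sa, w b ^ ((1:ℝ)-q) * a b ^ q) ^ (p/q) * s ^ (1 - p/q) := by
              apply mul_le_mul_of_nonneg_left _ (Real.rpow_nonneg hKq0 _)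
              apply Real.rpow_le_rpow (Finset.sum_nonneg fun b _ => (hw0 b).le) hSaw
              have h : p / q ≤ 1 := by rw [div_le_one hq0]; exact hpq
              linarith
      have hGle : (∑ b ∈ Sa, w b ^ ((1:ℝ)-q) * a b ^ q) ^ ((1:ℝ)/q)
          ≤ ρ / s ^ ((1:ℝ) - 1/q) * sA + τ * E := by
        calc (∑ b ∈ Sa, w b ^ ((1:ℝ)-q) * a b ^ q) ^ ((1:ℝ)/q)
            ≤ ρ / s ^ ((1:ℝ) - 1/q) * (∑ b ∈ Saᶜ, a b) + τ * E := hNSP' Sa hSacard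
          _ ≤ ρ / s ^ ((1:ℝ) - 1/q) * sA + τ * E := by
              apply add_le_add_left
              apply mul_le_mul_of_nonneg_left _ (div_nonneg hρ0.le hs1q0.le)
              rw [hsA]
              exact Finset.sum_le_sum_of_subset_of_nonneg (Finset.subset_univ _)
                fun b _ _ => ha0 b
      have hid2 : s ^ ((1:ℝ)/p - 1/q) = s ^ ((1:ℝ)/p - 1) * s ^ ((1:ℝ) - 1/q) := by
        rw [← Real.rpow_add hs0]
        congr 1
        ring
      have hfin1 : n2p ω p v ≤ (1+ρ) * s ^ ((1:ℝ)/p - 1) * sA + τ * s ^ ((1:ℝ)/p - 1/q) * E := by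
        calc n2p ω p v
            ≤ (∑ b ∈ Sa, w b ^ ((1:ℝ)-p) * a b ^ p) ^ ((1:ℝ)/p)
              + (∑ b ∈ Saᶜ, w b ^ ((1:ℝ)-p) * a b ^ p) ^ ((1:ℝ)/p) := htri
          _ ≤ (∑ b ∈ Sa, w b ^ ((1:ℝ)-q) * a b ^ q) ^ ((1:ℝ)/q) * s ^ ((1:ℝ)/p - 1/q)
              + sA * s ^ ((1:ℝ)/p - 1) := add_le_add hXle hYle
          _ ≤ (ρ / s ^ ((1:ℝ) - 1/q) * sA + τ * E) * s ^ ((1:ℝ)/p - 1/q)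
              + sA * s ^ ((1:ℝ)/p - 1) := by
              apply add_le_add_left
              exact mul_le_mul_of_nonneg_right hGle (Real.rpow_nonneg hs0.le _)
          _ = (1+ρ) * s ^ ((1:ℝ)/p - 1) * sA + τ * s ^ ((1:ℝ)/p - 1/q) * E := by
              rw [hid2]
              field_simp
              ring
      have hcoef : (0:ℝ) ≤ (1+ρ) * s ^ ((1:ℝ)/p - 1) :=
        mul_nonneg (by linarith) (Real.rpow_nonneg hs0.le _)
      have hrw1 : ((1+ρ)^2/(1-ρ)) / s ^ (1 - 1/p) = ((1+ρ)^2/(1-ρ)) * s ^ ((1:ℝ)/p - 1) := by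
        rw [div_eq_mul_inv (((1+ρ)^2/(1-ρ))), ← Real.rpow_neg hs0.le,
          show -((1:ℝ) - 1/p) = 1/p - 1 by ring]
      have hrw2 : (τ*(3+ρ)/(1-ρ)) / s ^ (1/q - 1/p) = (τ*(3+ρ)/(1-ρ)) * s ^ ((1:ℝ)/p - 1/q) := by
        rw [div_eq_mul_inv ((τ*(3+ρ)/(1-ρ))), ← Real.rpow_neg hs0.le,
          show -((1:ℝ)/q - 1/p) = 1/p - 1/q by ring]
      calc n2p ω p v
          ≤ (1+ρ) * s ^ ((1:ℝ)/p - 1) * sA + τ * s ^ ((1:ℝ)/p - 1/q) * E := hfin1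
        _ ≤ (1+ρ) * s ^ ((1:ℝ)/p - 1) * ((1+ρ)/(1-ρ) * (n21 ω z - n21 ω x + 2 * sigmaS ω s x)
              + 2*(τ * s ^ ((1:ℝ) - 1/q))/(1-ρ) * E)
            + τ * s ^ ((1:ℝ)/p - 1/q) * E := by
            apply add_le_add_left
            exact mul_le_mul_of_nonneg_left hL1 hcoef
        _ = ((1+ρ)^2/(1-ρ)) / s ^ (1 - 1/p) * (n21 ω z - n21 ω x + 2 * sigmaS ω s x)
            + (τ*(3+ρ)/(1-ρ)) / s ^ (1/q - 1/p) * E := by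
            rw [hrw1, hrw2, hid2]
            field_simp
            ring
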